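/- In a partially additive field, for an element written as v × u with v dimensionless and u a non-zero element, its zero is 0_1 × u, its additive inverse is (−v) × u, and if v is non-zero and u has an inverse, its multiplicative inverse is v⁻¹ × u⁻¹. -/
import Mathlib


/-- A partially additive field: partial addition (modeled via `Option`, `none` = undefined),
total multiplication, per-element zeros, etc. -/
structure PAF (Q : Type*) where
  add : Q → Q → Option Q
  mul : Q → Q → Q
  zero : Q → Q
  one : Q
  neg : Q → Q
  inv : Q → Q
  add_comm : ∀ a b, add a b = add b a
  mul_comm : ∀ a b, mul a b = mul b a
  add_assoc : ∀ a b c, (add a b).bind (fun x => add x c) = (add b c).bind (fun x => add a x)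
  mul_assoc : ∀ a b c, mul (mul a b) c = mul a (mul b c)
  left_distrib : ∀ a b c, (add b c).map (mul a) = add (mul a b) (mul a c)
  add_zero : ∀ a, add a (zero a) = some a
  zero_unique : ∀ a z, add a z = some a → z = zero a
  mul_one : ∀ a, mul a one = a
  add_neg : ∀ a, add a (neg a) = some (zero a)
  mul_inv : ∀ a, (¬ ∃ b, a = zero b) → mul a (inv a) = one
  nontrivial : ∀ a b, a = zero b → ∃ c, (¬ ∃ d, c = zero d) ∧ a = zero c

namespace PAF
variable {Q : Type*} (F : PAF Q)

/-- `a` is a zero element. -/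
def IsZero (a : Q) : Prop := ∃ b, a = F.zero b

/-- `a` and `b` are summable (their sum is defined). -/
def Summable (a b : Q) : Prop := (F.add a b).isSome

/-- `a` is dimensionless iff it is summable with `1`. -/
def Dimensionless (a : Q) : Prop := F.Summable a F.one

/-- `n`-th power via the total multiplication. -/
def pow (a : Q) : ℕ → Q
  | 0 => F.one
  | n + 1 => F.mul a (pow a n)

end PAF

namespace PAF
variable {Q : Type*} (F : PAF Q)

/-- If `a + b` is defined, their zeros coincide. -/
lemma zero_eq_of_add {a b s : Q} (h : F.add a b = some s) : F.zero a = F.zero b := by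
  have key : ∀ x y t : Q, F.add x y = some t → F.zero y = F.zero t := by
    intro x y t ht
    have := F.add_assoc x y (F.zero y)
    rw [ht] at this
    simp only [Option.bind] at this
    rw [F.add_zero y] at this
    simp only [Option.bind] at this
    rw [ht] at this
    exact F.zero_unique t (F.zero y) this
  have h1 := key a b s h
  have h2 := key b a s (by rw [F.add_comm]; exact h)
  rw [h2, h1]

lemma mul_zero' (x b : Q) : F.mul x (F.zero b) = F.zero (F.mul x b) := by
  have := F.left_distrib x b (F.zero b)
  rw [F.add_zero b] at this
  simp only [Option.map] at this
  exact F.zero_unique (F.mul x b) (F.mul x (F.zero b)) this.symm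

lemma neg_unique {a x : Q} (h : F.add a x = some (F.zero a)) : x = F.neg a := by
  have hzx : F.zero a = F.zero x := F.zero_eq_of_add h
  have hzn : F.zero a = F.zero (F.neg a) := F.zero_eq_of_add (F.add_neg a)
  -- add (zero a) x = some (neg a)
  have assoc := F.add_assoc (F.neg a) a x
  rw [F.add_comm (F.neg a) a, F.add_neg a, h] at assoc
  simp only [Option.bind] at assoc
  rw [F.add_comm (F.neg a) (F.zero a), hzn, F.add_comm (F.zero (F.neg a)) (F.neg a),
    F.add_zero (F.neg a)] at assoc
  rw [← hzn] at assoc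
  have hx : F.add (F.zero a) x = some x := by
    rw [F.add_comm, hzx, F.add_zero]
  rw [hx] at assoc
  exact Option.some.inj assoc

lemma one_not_zero : ¬ F.IsZero F.one := by
  rintro ⟨b, hb⟩
  obtain ⟨c, hc, hc2⟩ := F.nontrivial F.one b hb
  apply hc
  refine ⟨F.mul c c, ?_⟩
  have := F.mul_zero' c c
  rw [← hc2, F.mul_one] at this
  exact this

lemma inv_unique {a b : Q} (ha : ¬ F.IsZero a) (h : F.mul a b = F.one) : b = F.inv a := by
  have : F.mul b (F.mul a (F.inv a)) = F.mul (F.mul b a) (F.inv a) := (F.mul_assoc b a (F.inv a)).symm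
  rw [F.mul_inv a ha, F.mul_one, F.mul_comm b a, h, F.mul_comm, F.mul_one] at this
  exact this

end PAF

/-- For `v × u` with `v` dimensionless and `u` non-zero: its zero is `0₁ × u`, its additive
inverse is `(−v) × u`, and (if `v` is non-zero) its multiplicative inverse is `v⁻¹ × u⁻¹`. -/
theorem value_unit_arithmetic {Q : Type*} (F : PAF Q) (v u : Q)
    (hv : F.Dimensionless v) (hu : ¬ F.IsZero u) :
    F.zero (F.mul v u) = F.mul (F.zero F.one) u ∧
    F.neg (F.mul v u) = F.mul (F.neg v) u ∧
    (¬ F.IsZero v → F.inv (F.mul v u) = F.mul (F.inv v) (F.inv u)) := by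
  -- zero v = zero 1
  obtain ⟨s, hs⟩ := Option.isSome_iff_exists.mp hv
  have hz1 : F.zero v = F.zero F.one := F.zero_eq_of_add hs
  have part1 : F.zero (F.mul v u) = F.mul (F.zero F.one) u := by
    rw [F.mul_comm v u, ← F.mul_zero' u v, hz1, F.mul_comm]
  refine ⟨part1, ?_, ?_⟩
  · -- neg
    have hdist := F.left_distrib u v (F.neg v)
    rw [F.add_neg v] at hdist
    simp only [Option.map] at hdist
    have : F.add (F.mul v u) (F.mul (F.neg v) u) = some (F.zero (F.mul v u)) := by
      rw [F.mul_comm v u, F.mul_comm (F.neg v) u, ← hdist]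
      rw [F.mul_zero' u v]
    exact (F.neg_unique this).symm
  · intro hvz
    have hprod : F.mul (F.mul v u) (F.mul (F.inv v) (F.inv u)) = F.one := by
      rw [F.mul_assoc v u, F.mul_comm u (F.mul (F.inv v) (F.inv u)),
        F.mul_assoc (F.inv v) (F.inv u) u, F.mul_comm (F.inv u) u,
        F.mul_inv u hu, F.mul_one, F.mul_inv v hvz]
    apply Eq.symm
    apply F.inv_unique _ hprod
    rintro ⟨c, hc⟩
    apply F.one_not_zero
    rw [hc, F.mul_comm, F.mul_zero'] at hprod
    exact ⟨_, hprod.symm⟩
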